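/- The number of x-parking functions P_n(x) satisfies P_n(x) = ∑_{(a_1,…,a_n) ∈ PF(n)} x_{a_1}·x_{a_2}⋯x_{a_n}, where PF(n) is the set of ordinary parking functions of length n. -/
import Mathlib

open Finset

namespace CardXParkingAux

variable {n : ℕ}

/-- extension of `x` to `ℕ` by zero -/
def xe (x : Fin n → ℕ) (l : ℕ) : ℕ := if h : l < n then x ⟨l, h⟩ else 0

/-- partial sums -/
def T (x : Fin n → ℕ) (k : ℕ) : ℕ := ∑ l ∈ Finset.range k, xe x l

lemma T_mono (x : Fin n → ℕ) {k m : ℕ} (h : k ≤ m) : T x k ≤ T x m :=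
  Finset.sum_le_sum_of_subset (Finset.range_subset_range.2 h)

lemma T_succ (x : Fin n → ℕ) (k : ℕ) : T x (k + 1) = T x k + xe x k :=
  Finset.sum_range_succ _ _

lemma xe_coe (x : Fin n → ℕ) (i : Fin n) : xe x (i : ℕ) = x i := by
  simp [xe, i.isLt]

lemma S_eq (x : Fin n → ℕ) (i : Fin n) :
    ∑ l ∈ Finset.Iic i, x l = T x ((i : ℕ) + 1) := by
  have h1 : Finset.range ((i : ℕ) + 1) = Finset.Iic (i : ℕ) := by
    ext m; simp [Nat.lt_succ_iff]
  have h2 : (Finset.Iic i).map Fin.valEmbedding = Finset.Iic (i : ℕ) :=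
    Fin.map_valEmbedding_Iic i
  rw [T, h1, ← h2, Finset.sum_map]
  exact Finset.sum_congr rfl fun l _ => (xe_coe x l).symm

lemma interval_unique (x : Fin n → ℕ) {v k k' : ℕ}
    (h1 : T x k < v) (h2 : v ≤ T x (k + 1))
    (h1' : T x k' < v) (h2' : v ≤ T x (k' + 1)) : k = k' := by
  rcases lt_trichotomy k k' with h | h | h
  · have := h2.trans (T_mono x (by omega : k + 1 ≤ k'))
    omega
  · exact h
  · have := h2'.trans (T_mono x (by omega : k' + 1 ≤ k))
    omega

lemma mem_iff (x : Fin n → ℕ) {v k : ℕ}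
    (h1 : T x k < v) (h2 : v ≤ T x (k + 1)) (i : ℕ) :
    v ≤ T x (i + 1) ↔ k ≤ i := by
  constructor
  · intro h
    by_contra hlt
    push_neg at hlt
    have := T_mono x (by omega : i + 1 ≤ k)
    omega
  · intro h
    exact h2.trans (T_mono x (by omega))

end CardXParkingAux

open CardXParkingAux

/-- `P_n(x) = ∑_{(a_1,…,a_n) ∈ PF(n)} x_{a_1}⋯x_{a_n}`: the number of `x`-parking
functions is the sum over ordinary parking functions (encoded 0-based as maps
`f : Fin n → Fin n`, where `f i` represents `a_i - 1`) of the monomials `∏ x_{a_i}`. -/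
theorem card_x_parking_eq_sum_over_parking (n : ℕ) (hn : 0 < n) (x : Fin n → ℕ) :
    Nat.card {a : Fin n → ℕ // (∀ i, 1 ≤ a i) ∧
        ∀ i : Fin n, (i : ℕ) + 1 ≤
          (Finset.univ.filter (fun j => a j ≤ ∑ l ∈ Finset.Iic i, x l)).card} =
      ∑ f : Fin n → Fin n,
        if (∀ i : Fin n, (i : ℕ) + 1 ≤ (Finset.univ.filter (fun j => f j ≤ i)).card)
        then ∏ i : Fin n, x (f i) else 0 := by
  classical
  set PF : (Fin n → Fin n) → Prop := fun f =>
    ∀ i : Fin n, (i : ℕ) + 1 ≤ (Finset.univ.filter (fun j => f j ≤ i)).card with hPF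
  set A := {a : Fin n → ℕ // (∀ i, 1 ≤ a i) ∧
      ∀ i : Fin n, (i : ℕ) + 1 ≤
        (Finset.univ.filter (fun j => a j ≤ ∑ l ∈ Finset.Iic i, x l)).card} with hA
  -- the map from (parking function, offsets) to x-parking functions
  set Φ : (Σ f : {f : Fin n → Fin n // PF f}, ∀ j : Fin n, Fin (x (f.1 j))) → A :=
    fun p => ⟨fun j => T x (p.1.1 j) + (p.2 j : ℕ) + 1, by
      constructor
      · intro i
        show 1 ≤ T x (p.1.1 i) + (p.2 i : ℕ) + 1
        omega
      · intro i
        show (i : ℕ) + 1 ≤ (Finset.univ.filter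
            (fun j => T x (p.1.1 j) + (p.2 j : ℕ) + 1 ≤ ∑ l ∈ Finset.Iic i, x l)).card
        have hset : (Finset.univ.filter
              (fun j => T x (p.1.1 j) + (p.2 j : ℕ) + 1 ≤ ∑ l ∈ Finset.Iic i, x l))
            = Finset.univ.filter (fun j => p.1.1 j ≤ i) := by
          apply Finset.filter_congr
          intro j _
          rw [S_eq x i]
          have h1 : T x (p.1.1 j) < T x (p.1.1 j) + (p.2 j : ℕ) + 1 := by omega
          have h2 : T x (p.1.1 j) + (p.2 j : ℕ) + 1 ≤ T x ((p.1.1 j : ℕ) + 1) := by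
            rw [T_succ, xe_coe]
            have hg : (p.2 j : ℕ) < x (p.1.1 j) := (p.2 j).isLt
            omega
          rw [mem_iff x h1 h2 (i : ℕ)]
          omega
        rw [hset]
        exact p.1.2 i⟩ with hΦ
  have hbij : Function.Bijective Φ := by
    constructor
    · -- injective
      rintro ⟨⟨f, hf⟩, g⟩ ⟨⟨f', hf'⟩, g'⟩ h
      have hfun : ∀ j, T x (f j) + (g j : ℕ) + 1 = T x (f' j) + (g' j : ℕ) + 1 :=
        fun j => congrFun (congrArg Subtype.val h) j
      have hglt : ∀ j, (g j : ℕ) < x (f j) := fun j => (g j).isLt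
      have hglt' : ∀ j, (g' j : ℕ) < x (f' j) := fun j => (g' j).isLt
      have hff' : f = f' := by
        funext j
        have h1 : T x (f j) < T x (f j) + (g j : ℕ) + 1 := by omega
        have h2 : T x (f j) + (g j : ℕ) + 1 ≤ T x ((f j : ℕ) + 1) := by
          rw [T_succ, xe_coe]; have := hglt j; omega
        have h1' : T x (f' j) < T x (f j) + (g j : ℕ) + 1 := by rw [hfun j]; omega
        have h2' : T x (f j) + (g j : ℕ) + 1 ≤ T x ((f' j : ℕ) + 1) := by
          rw [hfun j, T_succ, xe_coe]; have := hglt' j; omega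
        exact Fin.ext (interval_unique x h1 h2 h1' h2')
      subst hff'
      have hgg' : g = g' := by
        funext j
        have := hfun j
        exact Fin.ext (by omega)
      subst hgg'
      rfl
    · -- surjective
      rintro ⟨a, ha1, ha2⟩
      -- all values are at most T x n
      have hub : ∀ j, a j ≤ T x n := by
        intro j
        set iN : Fin n := ⟨n - 1, by omega⟩ with hiN
        have hcard := ha2 iN
        have hle : (Finset.univ.filter
            (fun j => a j ≤ ∑ l ∈ Finset.Iic iN, x l)).card ≤ n :=
          le_trans (Finset.card_filter_le _ _) (by simp)
        have hiNval : (iN : ℕ) + 1 = n := by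
          show n - 1 + 1 = n; omega
        have huniv : (Finset.univ.filter
            (fun j => a j ≤ ∑ l ∈ Finset.Iic iN, x l)) = Finset.univ := by
          apply Finset.eq_univ_of_card
          simp only [Fintype.card_fin]
          omega
        have hj : j ∈ (Finset.univ.filter
            (fun j => a j ≤ ∑ l ∈ Finset.Iic iN, x l)) := by
          rw [huniv]; exact Finset.mem_univ j
        rw [Finset.mem_filter] at hj
        have := hj.2
        rwa [S_eq x iN, hiNval] at this
      have hex : ∀ j, ∃ k, a j ≤ T x (k + 1) := fun j => ⟨n - 1, by
        have hn1 : n - 1 + 1 = n := by omega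
        rw [hn1]; exact hub j⟩
      set F : Fin n → ℕ := fun j => Nat.find (hex j) with hF
      have hFlt : ∀ j, F j < n := by
        intro j
        have : F j ≤ n - 1 := Nat.find_min' (hex j) (by
          have hn1 : n - 1 + 1 = n := by omega
          rw [hn1]; exact hub j)
        omega
      have hspec : ∀ j, a j ≤ T x (F j + 1) := fun j => Nat.find_spec (hex j)
      have hlow : ∀ j, T x (F j) < a j := by
        intro j
        rcases Nat.eq_zero_or_pos (F j) with h0 | hpos
        · rw [h0]
          have hT0 : T x 0 = 0 := by simp [T]
          rw [hT0]
          exact ha1 j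
        · have hmin := Nat.find_min (hex j) (show F j - 1 < F j by omega)
          have he : F j - 1 + 1 = F j := by omega
          rw [he] at hmin
          omega
      set f : Fin n → Fin n := fun j => ⟨F j, hFlt j⟩ with hf
      have hxf : ∀ j, a j - T x (F j) - 1 < x (f j) := by
        intro j
        have h2 := hspec j
        rw [T_succ] at h2
        have hxe : xe x (F j) = x (f j) := by
          simp [xe, hFlt j, hf]
        rw [hxe] at h2
        have := hlow j
        omega
      have hPFf : PF f := by
        intro i
        have hset : (Finset.univ.filter (fun j => f j ≤ i))
            = Finset.univ.filter (fun j => a j ≤ ∑ l ∈ Finset.Iic i, x l) := by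
          apply Finset.filter_congr
          intro j _
          rw [S_eq x i]
          rw [mem_iff x (hlow j) (hspec j) (i : ℕ)]
          exact Iff.rfl
        rw [hset]
        exact ha2 i
      refine ⟨⟨⟨f, hPFf⟩, fun j => ⟨a j - T x (F j) - 1, hxf j⟩⟩, ?_⟩
      apply Subtype.ext
      funext j
      show T x (f j) + (a j - T x (F j) - 1) + 1 = a j
      have h1 : (f j : ℕ) = F j := rfl
      rw [h1]
      have := hlow j
      omega
  have hcard := Nat.card_eq_of_bijective Φ hbij
  rw [← hcard]
  rw [Nat.card_eq_fintype_card, Fintype.card_sigma]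
  have hsum : ∀ f : {f : Fin n → Fin n // PF f},
      Fintype.card (∀ j : Fin n, Fin (x (f.1 j))) = ∏ j : Fin n, x (f.1 j) := by
    intro f
    rw [Fintype.card_pi]
    exact Finset.prod_congr rfl fun j _ => Fintype.card_fin _
  rw [Finset.sum_congr rfl fun f _ => hsum f]
  rw [← Finset.sum_filter]
  exact (Finset.sum_subtype (Finset.univ.filter PF)
    (fun f => by simp) (fun f => ∏ i : Fin n, x (f i))).symm
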